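/- For a symmetric polynomial f ∈ ℝ⟨X_1,...,X_n⟩ (f* = f), the following are equivalent: (i) tr(f(A_1,...,A_n)) ≥ 0 for all s ∈ ℕ and all symmetric matrices A_i ∈ ℝ^{s×s}; (ii) tr(f(A_1,...,A_n)) ≥ 0 for all s ∈ ℕ and all self-adjoint matrices A_i ∈ ℂ^{s×s}. -/

import Mathlib

abbrev NCPoly (k : Type) [CommSemiring k] (n : ℕ) := MonoidAlgebra k (FreeMonoid (Fin n))

noncomputable def ncWord (k : Type) [CommSemiring k] {n : ℕ} (w : FreeMonoid (Fin n)) : NCPoly k n :=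
  MonoidAlgebra.of k (FreeMonoid (Fin n)) w

noncomputable def ncX (k : Type) [CommSemiring k] {n : ℕ} (i : Fin n) : NCPoly k n :=
  ncWord k (FreeMonoid.of i)

/-- The involution on `k⟨X⟩` fixing the variables and conjugating coefficients. -/
noncomputable def ncStar {k : Type} [CommSemiring k] [StarRing k] {n : ℕ} (f : NCPoly k n) : NCPoly k n :=
  MonoidAlgebra.ofCoeff (Finsupp.mapDomain FreeMonoid.reverse (Finsupp.mapRange star (star_zero k) f.coeff))

/-- `f` and `g` are cyclically equivalent: `f - g` is a sum of commutators. -/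
def IsCyclicEquiv {k : Type} [CommRing k] {n : ℕ} (f g : NCPoly k n) : Prop :=
  f - g ∈ AddSubmonoid.closure {x : NCPoly k n | ∃ p q, x = p * q - q * p}

/-- The quadratic module generated by the `1 - X_i^2`: all finite sums of
elements `g* g` and `g* (1 - X_i^2) g`. -/
noncomputable def QuadMod (k : Type) [CommRing k] [StarRing k] (n : ℕ) : AddSubmonoid (NCPoly k n) :=
  AddSubmonoid.closure
    ({x | ∃ g : NCPoly k n, x = ncStar g * g} ∪
     {x | ∃ (g : NCPoly k n) (i : Fin n), x = ncStar g * (1 - (ncX k i) ^ 2) * g})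

/-- Evaluation of a noncommutative polynomial at a tuple of matrices. -/
noncomputable def ncEval {k : Type} [CommRing k] {n s : ℕ}
    (A : Fin n → Matrix (Fin s) (Fin s) k) :
    NCPoly k n →ₐ[k] Matrix (Fin s) (Fin s) k :=
  MonoidAlgebra.lift k (Matrix (Fin s) (Fin s) k) (FreeMonoid (Fin n)) (FreeMonoid.lift A)

/-- A self-adjoint contraction matrix: `A* = A` and `1 - A²` positive semidefinite. -/
def IsSAContraction {k : Type} [CommRing k] [StarRing k] [PartialOrder k] [StarOrderedRing k]
    {s : ℕ} (A : Matrix (Fin s) (Fin s) k) : Prop :=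
  A.IsHermitian ∧ (1 - A * A).PosSemidef

/-- The natural inclusion `ℝ⟨X⟩ → ℂ⟨X⟩`. -/
noncomputable def toC {n : ℕ} : NCPoly ℝ n →ₐ[ℝ] NCPoly ℂ n :=
  MonoidAlgebra.lift ℝ (NCPoly ℂ n) (FreeMonoid (Fin n)) (MonoidAlgebra.of ℂ (FreeMonoid (Fin n)))

open scoped Matrix

/-- The embedding `a+bi ↦ [[a,-b],[b,a]]` as an `ℝ`-algebra hom. -/
noncomputable def cMat : ℂ →ₐ[ℝ] Matrix (Fin 2) (Fin 2) ℝ where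
  toFun z := !![z.re, -z.im; z.im, z.re]
  map_one' := by ext i j; fin_cases i <;> fin_cases j <;> simp [Matrix.one_apply]
  map_mul' z w := by
    ext i j; fin_cases i <;> fin_cases j <;>
      simp [Matrix.mul_apply, Fin.sum_univ_two, Complex.mul_re, Complex.mul_im] <;> ring
  map_zero' := by ext i j; fin_cases i <;> fin_cases j <;> simp
  map_add' z w := by ext i j; fin_cases i <;> fin_cases j <;> simp <;> ring
  commutes' r := by
    ext i j; fin_cases i <;> fin_cases j <;>
      simp [Matrix.algebraMap_eq_diagonal, Matrix.diagonal]

lemma cMat_transpose (z : ℂ) : (cMat z)ᵀ = cMat (starRingEnd ℂ z) := by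
  ext i j; fin_cases i <;> fin_cases j <;> simp [cMat]

lemma cMat_trace (z : ℂ) : Matrix.trace (cMat z) = 2 * z.re := by
  simp [cMat, Matrix.trace, Fin.sum_univ_two]; ring

/-- The real `2s × 2s` representation of complex `s × s` matrices. -/
noncomputable def toRealM (s : ℕ) :
    Matrix (Fin s) (Fin s) ℂ →ₐ[ℝ] Matrix (Fin (s*2)) (Fin (s*2)) ℝ :=
  ((Matrix.reindexAlgEquiv ℝ ℝ finProdFinEquiv).toAlgHom.comp
    (Matrix.compAlgEquiv (Fin s) (Fin 2) ℝ ℝ).toAlgHom).comp cMat.mapMatrix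

lemma toRealM_apply {s : ℕ} (M : Matrix (Fin s) (Fin s) ℂ) (p q : Fin (s*2)) :
    toRealM s M p q =
      cMat (M (finProdFinEquiv.symm p).1 (finProdFinEquiv.symm q).1)
        (finProdFinEquiv.symm p).2 (finProdFinEquiv.symm q).2 := by
  simp [toRealM, Matrix.reindexAlgEquiv_apply, Matrix.compAlgEquiv_apply,
    Matrix.reindex_apply, Matrix.submatrix_apply]

lemma toRealM_isHermitian {s : ℕ} {M : Matrix (Fin s) (Fin s) ℂ} (hM : M.IsHermitian) :
    (toRealM s M).IsHermitian := by
  ext p q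
  simp only [Matrix.conjTranspose_apply, star_trivial, toRealM_apply]
  rw [show cMat (M (finProdFinEquiv.symm q).1 (finProdFinEquiv.symm p).1)
        (finProdFinEquiv.symm q).2 (finProdFinEquiv.symm p).2
      = (cMat (M (finProdFinEquiv.symm q).1 (finProdFinEquiv.symm p).1))ᵀ
        (finProdFinEquiv.symm p).2 (finProdFinEquiv.symm q).2 from rfl,
    cMat_transpose]
  exact congrFun (congrFun (congrArg _ (hM.apply _ _)) _) _

lemma toRealM_trace {s : ℕ} (M : Matrix (Fin s) (Fin s) ℂ) :
    Matrix.trace (toRealM s M) = 2 * (Matrix.trace M).re := by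
  have h1 : Matrix.trace (toRealM s M)
      = Matrix.trace ((Matrix.compAlgEquiv (Fin s) (Fin 2) ℝ ℝ) (cMat.mapMatrix M)) := by
    simp only [toRealM, AlgHom.comp_apply, AlgEquiv.toAlgHom_eq_coe, AlgHom.coe_coe,
      Matrix.reindexAlgEquiv_apply, Matrix.reindex_apply]
    simp [Matrix.trace, Matrix.diag, Matrix.submatrix_apply]
    exact Equiv.sum_comp finProdFinEquiv.symm (fun p => (Matrix.compAlgEquiv (Fin s) (Fin 2) ℝ ℝ) (cMat.mapMatrix M) p p)
  rw [h1]
  have h2 : ∀ N : Matrix (Fin s) (Fin s) (Matrix (Fin 2) (Fin 2) ℝ),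
      Matrix.trace ((Matrix.compAlgEquiv (Fin s) (Fin 2) ℝ ℝ) N)
        = ∑ i, Matrix.trace (N i i) := by
    intro N
    simp [Matrix.trace, Matrix.diag, Matrix.compAlgEquiv_apply, Fintype.sum_prod_type]
  rw [h2]
  have h3 : ∀ i : Fin s, Matrix.trace (cMat.mapMatrix M i i) = 2 * (M i i).re := fun i => by
    simp [cMat_trace]
  calc ∑ i, Matrix.trace (cMat.mapMatrix M i i) = ∑ i, 2 * (M i i).re :=
        Finset.sum_congr rfl fun i _ => h3 i
    _ = 2 * (Matrix.trace M).re := by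
        rw [Matrix.trace, Complex.re_sum, Finset.mul_sum]; rfl


lemma ncAlgHom_ext {n : ℕ} {S : Type*} [Semiring S] [Algebra ℝ S]
    {Φ Ψ : NCPoly ℝ n →ₐ[ℝ] S} (h : ∀ i, Φ (ncX ℝ i) = Ψ (ncX ℝ i)) : Φ = Ψ := by
  apply MonoidAlgebra.algHom_ext'
  apply FreeMonoid.hom_eq
  intro i
  exact h i
  exact Subsingleton.elim _ _

lemma toC_ncX {n : ℕ} (i : Fin n) : toC (ncX ℝ i) = ncX ℂ i := by
  simp [toC, ncX, ncWord, MonoidAlgebra.lift_of]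

lemma toC_ncWord {n : ℕ} (w : FreeMonoid (Fin n)) : toC (ncWord ℝ w) = ncWord ℂ w :=
  MonoidAlgebra.lift_of _ _

lemma ncEval_ncX {k : Type} [CommRing k] {n s : ℕ} (A : Fin n → Matrix (Fin s) (Fin s) k)
    (i : Fin n) : ncEval A (ncX k i) = A i := by
  simp [ncEval, ncX, ncWord, MonoidAlgebra.lift_of]

lemma ncEval_ncWord {k : Type} [CommRing k] {n s : ℕ} (A : Fin n → Matrix (Fin s) (Fin s) k)
    (w : FreeMonoid (Fin n)) : ncEval A (ncWord k w) = FreeMonoid.lift A w :=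
  MonoidAlgebra.lift_of _ _

/-- evaluation commutes with `toRealM`. -/
lemma eval_toRealM {n s : ℕ} (A : Fin n → Matrix (Fin s) (Fin s) ℂ) (f : NCPoly ℝ n) :
    toRealM s (ncEval A (toC f)) = ncEval (fun i => toRealM s (A i)) f := by
  have h : (toRealM s).comp (((ncEval A).restrictScalars ℝ).comp toC)
      = ncEval (fun i => toRealM s (A i)) := by
    apply ncAlgHom_ext
    intro i
    show toRealM s (ncEval A (toC (ncX ℝ i))) = ncEval (fun i => toRealM s (A i)) (ncX ℝ i)
    rw [toC_ncX, ncEval_ncX, ncEval_ncX]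
  exact congrArg (fun g => g f) h

/-- evaluation commutes with entrywise `ℝ → ℂ`. -/
lemma eval_toC {n s : ℕ} (A : Fin n → Matrix (Fin s) (Fin s) ℝ) (f : NCPoly ℝ n) :
    ncEval (fun i => Complex.ofRealAm.mapMatrix (A i)) (toC f)
      = Complex.ofRealAm.mapMatrix (ncEval A f) := by
  have h : ((ncEval (fun i => Complex.ofRealAm.mapMatrix (A i))).restrictScalars ℝ).comp toC
      = (Complex.ofRealAm.mapMatrix).comp (ncEval A) := by
    apply ncAlgHom_ext
    intro i
    show ncEval (fun i => Complex.ofRealAm.mapMatrix (A i)) (toC (ncX ℝ i))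
        = Complex.ofRealAm.mapMatrix (ncEval A (ncX ℝ i))
    rw [toC_ncX, ncEval_ncX, ncEval_ncX]
  exact congrArg (fun g => g f) h

lemma freeLift_conjTranspose {k : Type} [CommRing k] [StarRing k] {n s : ℕ}
    (A : Fin n → Matrix (Fin s) (Fin s) k) (hA : ∀ i, (A i).IsHermitian)
    (w : FreeMonoid (Fin n)) :
    (FreeMonoid.lift A w)ᴴ = FreeMonoid.lift A (FreeMonoid.reverse w) := by
  induction w using FreeMonoid.recOn with
  | one =>
    rw [show FreeMonoid.reverse (1 : FreeMonoid (Fin n)) = 1 from rfl]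
    simp
  | of_mul x xs ih =>
    rw [map_mul, Matrix.conjTranspose_mul, FreeMonoid.reverse_mul, map_mul, ih,
      FreeMonoid.reverse_of, FreeMonoid.lift_eval_of, (hA x).eq]

noncomputable def revE (n : ℕ) : FreeMonoid (Fin n) ≃ FreeMonoid (Fin n) :=
  Function.Involutive.toPerm FreeMonoid.reverse (fun w => FreeMonoid.reverse_reverse (a := w))

lemma ncStar_apply {k : Type} [CommSemiring k] [StarRing k] {n : ℕ} (f : NCPoly k n)
    (w : FreeMonoid (Fin n)) : (ncStar f).coeff w = star (f.coeff (FreeMonoid.reverse w)) := by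
  have h1 : (ncStar f).coeff = Finsupp.mapDomain (⇑(revE n)) (Finsupp.mapRange star (star_zero k) f.coeff) :=
    rfl
  rw [h1, Finsupp.mapDomain_equiv_apply, Finsupp.mapRange_apply]
  have h2 : (revE n).symm w = FreeMonoid.reverse w := rfl
  rw [h2]

lemma ncStar_add {k : Type} [CommSemiring k] [StarRing k] {n : ℕ} (p q : NCPoly k n) :
    ncStar (p + q) = ncStar p + ncStar q := by
  apply MonoidAlgebra.ext
  apply Finsupp.ext
  intro w
  rw [MonoidAlgebra.coeff_add, Finsupp.add_apply, ncStar_apply, ncStar_apply, ncStar_apply,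
    MonoidAlgebra.coeff_add, Finsupp.add_apply, star_add]

lemma ncStar_smul {k R : Type} [CommSemiring k] [StarRing k] [Monoid R] [Star R]
    [DistribMulAction R k] [StarModule R k] {n : ℕ} (r : R) (p : NCPoly k n) :
    ncStar (r • p) = star r • ncStar p := by
  apply MonoidAlgebra.ext
  apply Finsupp.ext
  intro w
  rw [ncStar_apply, MonoidAlgebra.coeff_smul, Finsupp.smul_apply, star_smul,
    MonoidAlgebra.coeff_smul, Finsupp.smul_apply, ncStar_apply]

lemma ncStar_single {k : Type} [CommSemiring k] [StarRing k] {n : ℕ}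
    (w : FreeMonoid (Fin n)) (c : k) :
    ncStar (MonoidAlgebra.single w c) = MonoidAlgebra.single (FreeMonoid.reverse w) (star c) := by
  show MonoidAlgebra.ofCoeff (Finsupp.mapDomain FreeMonoid.reverse
      (Finsupp.mapRange star (star_zero k) (Finsupp.single w c))) = _
  rw [Finsupp.mapRange_single, Finsupp.mapDomain_single, MonoidAlgebra.ofCoeff_single]

lemma ncStar_ncWord {k : Type} [CommSemiring k] [StarRing k] {n : ℕ} (w : FreeMonoid (Fin n)) :
    ncStar (ncWord k w) = ncWord k (FreeMonoid.reverse w) := by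
  show ncStar (MonoidAlgebra.single w 1) = MonoidAlgebra.single (FreeMonoid.reverse w) 1
  rw [ncStar_single, star_one]

lemma ncEval_ncStar {k : Type} [CommRing k] [StarRing k] {n s : ℕ}
    (A : Fin n → Matrix (Fin s) (Fin s) k) (hA : ∀ i, (A i).IsHermitian)
    (p : NCPoly k n) : (ncEval A p)ᴴ = ncEval A (ncStar p) := by
  induction p using MonoidAlgebra.induction_on with
  | of w =>
    rw [show MonoidAlgebra.of k (FreeMonoid (Fin n)) w = ncWord k w from rfl,
      ncEval_ncWord, ncStar_ncWord, ncEval_ncWord, freeLift_conjTranspose A hA]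
  | add p q hp hq => rw [map_add, Matrix.conjTranspose_add, hp, hq, ncStar_add, map_add]
  | smul r p hp =>
    rw [map_smul, Matrix.conjTranspose_smul, hp, ncStar_smul, map_smul]

lemma toC_ncStar {n : ℕ} (f : NCPoly ℝ n) : ncStar (toC f) = toC (ncStar f) := by
  induction f using MonoidAlgebra.induction_on with
  | of w =>
    rw [show MonoidAlgebra.of ℝ (FreeMonoid (Fin n)) w = ncWord ℝ w from rfl,
      toC_ncWord, ncStar_ncWord, ncStar_ncWord, toC_ncWord]
  | add p q hp hq => rw [map_add, ncStar_add, hp, hq, ncStar_add, map_add]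
  | smul r p hp =>
    rw [map_smul, ncStar_smul, hp, ncStar_smul, map_smul]
theorem stmt13 {n : ℕ} (f : NCPoly ℝ n) (hf : ncStar f = f) :
    (∀ (s : ℕ) (A : Fin n → Matrix (Fin s) (Fin s) ℝ), (∀ i, (A i).IsHermitian) →
        0 ≤ Matrix.trace (ncEval A f)) ↔
    (∀ (s : ℕ) (A : Fin n → Matrix (Fin s) (Fin s) ℂ), (∀ i, (A i).IsHermitian) →
        ∃ r : ℝ, 0 ≤ r ∧ Matrix.trace (ncEval A (toC f)) = (r : ℂ)) := by
  constructor
  · -- real ⟹ complex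
    intro h s A hA
    set M := ncEval A (toC f) with hM
    have hMH : Mᴴ = M := by
      rw [hM, ncEval_ncStar A hA, toC_ncStar, hf]
    have htr : star (Matrix.trace M) = Matrix.trace M := by
      rw [← Matrix.trace_conjTranspose, hMH]
    have him : (Matrix.trace M).im = 0 := by
      have h2 := congrArg Complex.im htr
      simp only [Complex.star_def, Complex.conj_im] at h2
      linarith
    refine ⟨(Matrix.trace M).re, ?_, ?_⟩
    · have h2 : (0:ℝ) ≤ Matrix.trace (ncEval (fun i => toRealM s (A i)) f) :=
        h (s*2) _ (fun i => toRealM_isHermitian (hA i))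
      rw [← eval_toRealM, ← hM, toRealM_trace] at h2
      linarith
    · exact (Complex.ext (by simp) (by simp [him])).symm
  · -- complex ⟹ real
    intro h s A hA
    have hB : ∀ i, (Complex.ofRealAm.mapMatrix (A i) : Matrix (Fin s) (Fin s) ℂ).IsHermitian := by
      intro i
      ext p q
      simp only [AlgHom.mapMatrix_apply, Matrix.conjTranspose_apply, Matrix.map_apply,
        Complex.ofRealAm_coe, RCLike.star_def, Complex.conj_ofReal]
      exact congrArg Complex.ofReal ((star_trivial _).symm.trans ((hA i).apply p q))
    obtain ⟨r, hr0, hr⟩ := h s _ hB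
    rw [eval_toC] at hr
    have htr : Matrix.trace (Complex.ofRealAm.mapMatrix (ncEval A f))
        = ((Matrix.trace (ncEval A f) : ℝ) : ℂ) := by
      simp [AlgHom.mapMatrix_apply, Matrix.trace, Matrix.diag, Matrix.map_apply,
        Complex.ofReal_sum]
    rw [htr] at hr
    rw [Complex.ofReal_inj.mp hr]
    exact hr0
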